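/- arXiv:1212.1255 — 2 statements merged into one kernel-verified Lean document; each statement's English description precedes it below -/
import Mathlib

section
/- Let d ≥ 2 and let ρ ∈ L¹(ℝ^d) ∩ L∞(ℝ^d). Then there exists a constant C(d) > 0, depending only on d, such that the Newtonian-gradient field F(x) = ∫_{ℝ^d} (x − y)/‖x − y‖^d ρ(y) dy satisfies the log-Lipschitz estimate ‖F(x) − F(y)‖ ≤ C(d)(‖ρ‖_{L¹(ℝ^d)} + ‖ρ‖_{L∞(ℝ^d)}) ‖x − y‖ (1 + log⁻‖x − y‖) for all x, y ∈ ℝ^d. -/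
open Real Set MeasureTheory
open scoped ENNReal

noncomputable section

abbrev Euc (d : ℕ) := EuclideanSpace ℝ (Fin d)

/-- The concave modulus `φ` from the paper: `φ(x) = x (log x)²` for
`x ≤ e^{-1-√2}` (with `φ(0) = 0`, using `log 0 = 0`), and
`φ(x) = x + 2(1+√2)e^{-1-√2}` beyond the junction point. -/
def phi (x : ℝ) : ℝ :=
  if x ≤ Real.exp (-1 - Real.sqrt 2) then x * Real.log x ^ 2
  else x + 2 * (1 + Real.sqrt 2) * Real.exp (-1 - Real.sqrt 2)

/-- The Newtonian-gradient field `F(x) = ∫ (x−y)/‖x−y‖^d ρ(y) dy`. -/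
def newtField (d : ℕ) (ρ : Euc d → ℝ) (x : Euc d) : Euc d :=
  ∫ y : Euc d, (ρ y / ‖x - y‖ ^ d) • (x - y)

/-- `log⁻ t = max(0, −log t)`, the negative part of the logarithm. -/
def negLog (t : ℝ) : ℝ := max 0 (-Real.log t)

open Metric

local notation "dim" => Module.finrank ℝ

lemma my_lintegral_fun_norm_addHaar {E : Type*} [NormedAddCommGroup E] [NormedSpace ℝ E]
    [MeasurableSpace E] [BorelSpace E] [Nontrivial E] (μ : Measure E)
    [FiniteDimensional ℝ E] [μ.IsAddHaarMeasure] {f : ℝ → ℝ≥0∞} (hf : Measurable f) :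
    ∫⁻ x, f ‖x‖ ∂μ = (dim E) * μ (ball 0 1) *
      ∫⁻ r in Ioi (0 : ℝ), ENNReal.ofReal (r ^ (dim E - 1)) * f r := by
  calc
    ∫⁻ x, f ‖x‖ ∂μ = ∫⁻ x : ({0}ᶜ : Set E), f ‖(x : E)‖ ∂(μ.comap (↑)) := by
      rw [lintegral_subtype_comap (measurableSet_singleton (0:E)).compl
        (fun x : E => f ‖x‖), restrict_compl_singleton]
    _ = ∫⁻ p : sphere (0:E) 1 × Ioi (0:ℝ), f p.2
          ∂(μ.toSphere.prod (.volumeIoiPow (dim E - 1))) := by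
      rw [← (μ.measurePreserving_homeomorphUnitSphereProd).lintegral_comp_emb
        (Homeomorph.measurableEmbedding _) (fun p => f p.2)]
      exact lintegral_congr fun x => by
        rw [homeomorphUnitSphereProd_apply_snd_coe]
    _ = μ.toSphere univ * ∫⁻ r : Ioi (0:ℝ), f r ∂(Measure.volumeIoiPow (dim E - 1)) := by
      rw [lintegral_prod (fun p : (sphere (0:E) 1) × Ioi (0:ℝ) => f p.2)
        ((show Measurable fun p : sphere (0:E) 1 × Ioi (0:ℝ) => f (p.2 : ℝ) from
          hf.comp (measurable_subtype_coe.comp measurable_snd)).aemeasurable)]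
      simp [lintegral_const, mul_comm]
    _ = (dim E) * μ (ball 0 1) *
          ∫⁻ r in Ioi (0 : ℝ), ENNReal.ofReal (r ^ (dim E - 1)) * f r := by
      rw [Measure.toSphere_apply_univ, Measure.volumeIoiPow,
        lintegral_withDensity_eq_lintegral_mul _
          ((measurable_subtype_coe.pow_const _).ennreal_ofReal)
          (show Measurable fun r : Ioi (0:ℝ) => f (r:ℝ) from hf.comp measurable_subtype_coe)]
      rw [show (fun r : Ioi (0:ℝ) => (((fun r : Ioi (0:ℝ) => ENNReal.ofReal ((r:ℝ) ^ (dim E - 1))) * fun r : Ioi (0:ℝ) => f (r:ℝ)) r))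
          = fun r : Ioi (0:ℝ) => ENNReal.ofReal ((r:ℝ) ^ (dim E - 1)) * f (r:ℝ) from rfl,
        lintegral_subtype_comap measurableSet_Ioi
          (fun r : ℝ => ENNReal.ofReal (r ^ (dim E - 1)) * f r)]

variable {d : ℕ}

lemma euc_nontrivial (hd : 2 ≤ d) : Nontrivial (EuclideanSpace ℝ (Fin d)) :=
  Module.nontrivial_of_finrank_pos (R := ℝ)
    (by rw [finrank_euclideanSpace_fin]; omega)

/-- `∫_{ball 0 R} ‖z‖^{-(d-1)} dz = d vol(B₁) R`. -/
lemma KL1 (hd : 2 ≤ d) {R : ℝ} (hR : 0 < R) :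
    ∫⁻ w in ball (0 : EuclideanSpace ℝ (Fin d)) R, ENNReal.ofReal (1 / ‖w‖ ^ (d - 1)) =
      (d : ℝ≥0∞) * volume (ball (0 : EuclideanSpace ℝ (Fin d)) 1) * ENNReal.ofReal R := by
  haveI := euc_nontrivial hd
  have hmeas : Measurable fun t : ℝ =>
      if t < R then ENNReal.ofReal (1 / t ^ (d - 1)) else 0 :=
    Measurable.ite measurableSet_Iio
      ((measurable_const.div (measurable_id.pow_const _)).ennreal_ofReal) measurable_const
  have h1 : ∫⁻ w in ball (0 : EuclideanSpace ℝ (Fin d)) R,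
      ENNReal.ofReal (1 / ‖w‖ ^ (d - 1)) =
      ∫⁻ w : EuclideanSpace ℝ (Fin d),
        (fun t : ℝ => if t < R then ENNReal.ofReal (1 / t ^ (d - 1)) else 0) ‖w‖ := by
    rw [← lintegral_indicator (measurableSet_ball)]
    refine lintegral_congr fun w => ?_
    by_cases hw : w ∈ ball (0 : EuclideanSpace ℝ (Fin d)) R
    · rw [indicator_of_mem hw]
      simp only [mem_ball, dist_zero_right] at hw
      simp [hw]
    · rw [indicator_of_notMem hw]
      simp only [mem_ball, dist_zero_right, not_lt] at hw
      simp [not_lt.2 hw]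
  rw [h1, my_lintegral_fun_norm_addHaar volume hmeas, finrank_euclideanSpace_fin]
  congr 1
  have h2 : ∀ r ∈ Ioi (0 : ℝ),
      ENNReal.ofReal (r ^ (d - 1)) *
        (fun t : ℝ => if t < R then ENNReal.ofReal (1 / t ^ (d - 1)) else 0) r =
      (Iio R).indicator (fun _ => (1 : ℝ≥0∞)) r := by
    intro r hr
    have hr0 : (0:ℝ) < r := hr
    by_cases hrR : r < R
    · rw [Set.indicator_of_mem (show r ∈ Iio R from hrR)]
      simp only [hrR, if_pos]
      rw [← ENNReal.ofReal_mul (by positivity)]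
      rw [mul_one_div_cancel (by positivity)]
      simp
    · rw [Set.indicator_of_notMem (show r ∉ Iio R from hrR)]
      simp [hrR]
  rw [setLIntegral_congr_fun measurableSet_Ioi h2,
    lintegral_indicator measurableSet_Iio, Measure.restrict_restrict measurableSet_Iio,
    setLIntegral_one, Iio_inter_Ioi, Real.volume_Ioo, sub_zero]

/-- `∫_{ε ≤ ‖z‖ < 1} ‖z‖^{-d} dz = d vol(B₁) log(1/ε)`. -/
lemma KL2 (hd : 2 ≤ d) {ε : ℝ} (hε : 0 < ε) (hε1 : ε ≤ 1) :
    ∫⁻ w in ball (0 : EuclideanSpace ℝ (Fin d)) 1 \ ball (0 : EuclideanSpace ℝ (Fin d)) ε,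
        ENNReal.ofReal (1 / ‖w‖ ^ d) =
      (d : ℝ≥0∞) * volume (ball (0 : EuclideanSpace ℝ (Fin d)) 1) *
        ENNReal.ofReal (-Real.log ε) := by
  haveI := euc_nontrivial hd
  have hmeas : Measurable fun t : ℝ =>
      if t ∈ Ico ε 1 then ENNReal.ofReal (1 / t ^ d) else 0 :=
    Measurable.ite measurableSet_Ico
      ((measurable_const.div (measurable_id.pow_const _)).ennreal_ofReal) measurable_const
  have h1 : ∫⁻ w in ball (0 : EuclideanSpace ℝ (Fin d)) 1 \ ball 0 ε,
      ENNReal.ofReal (1 / ‖w‖ ^ d) =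
      ∫⁻ w : EuclideanSpace ℝ (Fin d),
        (fun t : ℝ => if t ∈ Ico ε 1 then ENNReal.ofReal (1 / t ^ d) else 0) ‖w‖ := by
    rw [← lintegral_indicator (measurableSet_ball.diff measurableSet_ball)]
    refine lintegral_congr fun w => ?_
    by_cases hw : w ∈ ball (0 : EuclideanSpace ℝ (Fin d)) 1 \ ball 0 ε
    · rw [Set.indicator_of_mem hw]
      obtain ⟨hw1, hw2⟩ := hw
      simp only [mem_ball, dist_zero_right, not_lt] at hw1 hw2
      simp [mem_Ico, hw1, hw2]
    · rw [Set.indicator_of_notMem hw]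
      simp only [mem_diff, mem_ball, dist_zero_right, not_lt, not_and, not_le] at hw
      by_cases h1 : ‖w‖ < 1
      · simp [mem_Ico, h1, not_le.2 (hw h1)]
      · simp [mem_Ico, h1]
  rw [h1, my_lintegral_fun_norm_addHaar volume hmeas, finrank_euclideanSpace_fin]
  congr 1
  have h2 : ∀ r ∈ Ioi (0 : ℝ),
      ENNReal.ofReal (r ^ (d - 1)) *
        (fun t : ℝ => if t ∈ Ico ε 1 then ENNReal.ofReal (1 / t ^ d) else 0) r =
      (Ico ε 1).indicator (fun t => ENNReal.ofReal (1 / t)) r := by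
    intro r hr
    have hr0 : (0:ℝ) < r := hr
    by_cases hrI : r ∈ Ico ε 1
    · rw [Set.indicator_of_mem hrI]
      simp only [hrI, if_pos]
      rw [← ENNReal.ofReal_mul (by positivity)]
      congr 1
      have hdd : d = (d - 1) + 1 := by omega
      rw [hdd, pow_succ]
      field_simp
      simp
    · rw [Set.indicator_of_notMem hrI]
      simp [hrI]
  rw [setLIntegral_congr_fun measurableSet_Ioi h2,
    lintegral_indicator measurableSet_Ico, Measure.restrict_restrict measurableSet_Ico]
  have hset : Ico ε 1 ∩ Ioi (0:ℝ) = Ico ε 1 := by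
    refine inter_eq_left.2 fun t ht => lt_of_lt_of_le hε ht.1
  rw [hset]
  have hInt : IntegrableOn (fun t : ℝ => 1 / t) (Ico ε 1) := by
    refine IntegrableOn.mono_set ?_ Ico_subset_Icc_self
    refine ContinuousOn.integrableOn_compact isCompact_Icc ?_
    exact continuousOn_const.div continuousOn_id fun t ht => (lt_of_lt_of_le hε ht.1).ne'
  rw [← ofReal_integral_eq_lintegral_ofReal hInt
      ((ae_restrict_iff' measurableSet_Ico).2 (Filter.Eventually.of_forall
        fun t ht => by have := lt_of_lt_of_le hε ht.1; positivity))]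
  congr 1
  have : ∫ t in Ico ε 1, 1 / t = ∫ t in Ioc ε 1, 1 / t := by
    rw [MeasureTheory.integral_Ico_eq_integral_Ioo, MeasureTheory.integral_Ioc_eq_integral_Ioo]
  rw [this, ← intervalIntegral.integral_of_le hε1]
  rw [integral_one_div (fun h => absurd (h.1) (by norm_num; nlinarith))]
  rw [Real.log_div one_ne_zero (ne_of_gt hε), Real.log_one, zero_sub]

lemma abs_pow_sub_pow_le' (n : ℕ) {p q M : ℝ} (hp : 0 ≤ p) (hq : 0 ≤ q)
    (hpM : p ≤ M) (hqM : q ≤ M) :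
    |p ^ n - q ^ n| ≤ n * M ^ (n - 1) * |p - q| := by
  have hM : 0 ≤ M := le_trans hp hpM
  have key : (∑ i ∈ Finset.range n, p ^ i * q ^ (n - 1 - i)) * (p - q) = p ^ n - q ^ n :=
    geom_sum₂_mul p q n
  rw [← key, abs_mul]
  gcongr
  calc |∑ i ∈ Finset.range n, p ^ i * q ^ (n - 1 - i)|
      ≤ ∑ i ∈ Finset.range n, |p ^ i * q ^ (n - 1 - i)| := Finset.abs_sum_le_sum_abs _ _
    _ ≤ ∑ _i ∈ Finset.range n, M ^ (n - 1) := by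
        refine Finset.sum_le_sum fun i hi => ?_
        rw [abs_mul, abs_pow, abs_pow, abs_of_nonneg hp, abs_of_nonneg hq]
        have hin : i + (n - 1 - i) = n - 1 := by
          have := Finset.mem_range.1 hi; omega
        calc p ^ i * q ^ (n - 1 - i) ≤ M ^ i * M ^ (n - 1 - i) := by gcongr
          _ = M ^ (n - 1) := by rw [← pow_add, hin]
    _ = n * M ^ (n - 1) := by rw [Finset.sum_const, Finset.card_range]; simp [nsmul_eq_mul]

/-- Kernel difference estimate: if `‖a − b‖ ≤ ‖a‖/2` then
`‖a/‖a‖^d − b/‖b‖^d‖ ≤ (1 + d 3^d) ‖a−b‖ / ‖a‖^d`. -/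
lemma ker_diff (hd : 2 ≤ d) (a b : EuclideanSpace ℝ (Fin d))
    (h : ‖a - b‖ ≤ ‖a‖ / 2) :
    ‖(‖a‖ ^ d)⁻¹ • a - (‖b‖ ^ d)⁻¹ • b‖ ≤
      (1 + d * 3 ^ d) * ‖a - b‖ / ‖a‖ ^ d := by
  rcases eq_or_ne a b with rfl | hab
  · simp only [sub_self, norm_zero]
    positivity
  have hr : 0 < ‖a - b‖ := by simpa [sub_eq_zero] using hab
  have ha : 0 < ‖a‖ := by nlinarith
  have hb : ‖a‖ / 2 ≤ ‖b‖ := by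
    have := norm_sub_norm_le a b
    nlinarith
  have hb0 : 0 < ‖b‖ := lt_of_lt_of_le (by positivity) hb
  have hbM : ‖b‖ ≤ 3 / 2 * ‖a‖ := by
    have := norm_le_norm_add_norm_sub' b a
    rw [norm_sub_rev] at this
    nlinarith
  have had : (0:ℝ) < ‖a‖ ^ d := by positivity
  have hbd : (0:ℝ) < ‖b‖ ^ d := by positivity
  have decomp : (‖a‖ ^ d)⁻¹ • a - (‖b‖ ^ d)⁻¹ • b =
      (‖a‖ ^ d)⁻¹ • (a - b) + ((‖a‖ ^ d)⁻¹ - (‖b‖ ^ d)⁻¹) • b := by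
    rw [smul_sub, sub_smul]; abel
  rw [decomp]
  have t1 : ‖(‖a‖ ^ d)⁻¹ • (a - b)‖ = ‖a - b‖ / ‖a‖ ^ d := by
    rw [norm_smul, norm_inv, norm_pow, norm_norm, div_eq_inv_mul]
  have t2 : ‖((‖a‖ ^ d)⁻¹ - (‖b‖ ^ d)⁻¹) • b‖ ≤ (d * 3 ^ d) * ‖a - b‖ / ‖a‖ ^ d := by
    rw [norm_smul, Real.norm_eq_abs]
    have habs : |(‖a‖ ^ d)⁻¹ - (‖b‖ ^ d)⁻¹| = |‖b‖ ^ d - ‖a‖ ^ d| / (‖a‖ ^ d * ‖b‖ ^ d) := by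
      rw [inv_sub_inv (ne_of_gt had) (ne_of_gt hbd), abs_div,
        abs_of_pos (mul_pos had hbd)]
    rw [habs]
    have hnum : |‖b‖ ^ d - ‖a‖ ^ d| ≤ d * (3 / 2 * ‖a‖) ^ (d - 1) * ‖a - b‖ := by
      have := abs_pow_sub_pow_le' d (norm_nonneg b) (norm_nonneg a) hbM
        (by nlinarith : ‖a‖ ≤ 3 / 2 * ‖a‖)
      refine le_trans this ?_
      gcongr
      rw [abs_sub_comm]
      exact abs_norm_sub_norm_le a b
    calc |‖b‖ ^ d - ‖a‖ ^ d| / (‖a‖ ^ d * ‖b‖ ^ d) * ‖b‖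
        = |‖b‖ ^ d - ‖a‖ ^ d| * ‖b‖ / (‖a‖ ^ d * ‖b‖ ^ d) := by ring
      _ ≤ (d * (3 / 2 * ‖a‖) ^ (d - 1) * ‖a - b‖) * ‖b‖ / (‖a‖ ^ d * ‖b‖ ^ d) := by
          gcongr
      _ ≤ (d * (3 ^ d * ‖b‖ ^ (d - 1)) * ‖a - b‖) * ‖b‖ / (‖a‖ ^ d * ‖b‖ ^ d) := by
          gcongr
          calc (3 / 2 * ‖a‖) ^ (d - 1) = 3 ^ (d - 1) * (‖a‖ / 2) ^ (d - 1) := by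
                rw [← mul_pow]; ring_nf
            _ ≤ 3 ^ d * ‖b‖ ^ (d - 1) := by
                refine mul_le_mul (pow_le_pow_right₀ (by norm_num) (by omega))
                  (pow_le_pow_left₀ (by positivity) hb _) (by positivity) (by positivity)
      _ = (d * 3 ^ d) * ‖a - b‖ / ‖a‖ ^ d := by
          have hbb : ‖b‖ ^ d = ‖b‖ ^ (d - 1) * ‖b‖ := by
            rw [← pow_succ]; congr 1; omega
          rw [hbb]; field_simp
  calc ‖(‖a‖ ^ d)⁻¹ • (a - b) + ((‖a‖ ^ d)⁻¹ - (‖b‖ ^ d)⁻¹) • b‖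
      ≤ ‖(‖a‖ ^ d)⁻¹ • (a - b)‖ + ‖((‖a‖ ^ d)⁻¹ - (‖b‖ ^ d)⁻¹) • b‖ := norm_add_le _ _
    _ ≤ ‖a - b‖ / ‖a‖ ^ d + (d * 3 ^ d) * ‖a - b‖ / ‖a‖ ^ d := by rw [t1]; gcongr
    _ = (1 + d * 3 ^ d) * ‖a - b‖ / ‖a‖ ^ d := by ring


set_option maxHeartbeats 2000000 in
/-- for `ρ ∈ L¹ ∩ L∞(ℝ^d)`, `d ≥ 2`, the Newtonian-gradient
field satisfies the log-Lipschitz estimate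
`‖F(x) − F(y)‖ ≤ C(d)(‖ρ‖_{L¹} + ‖ρ‖_{L∞}) ‖x−y‖ (1 + log⁻‖x−y‖)`
for a constant `C(d) > 0` depending only on the dimension. -/
theorem newtField_logLipschitz (d : ℕ) (hd : 2 ≤ d) :
    ∃ C : ℝ, 0 < C ∧
      ∀ (ρ : Euc d → ℝ) (A B : ℝ), Integrable ρ →
        (∫ x : Euc d, |ρ x|) ≤ A →
        (∀ᵐ x ∂(volume : Measure (Euc d)), |ρ x| ≤ B) →
        ∀ x y : Euc d,
          ‖newtField d ρ x - newtField d ρ y‖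
            ≤ C * (A + B) * ‖x - y‖ * (1 + negLog ‖x - y‖) := by
  haveI := euc_nontrivial hd
  set V : ℝ≥0∞ := volume (ball (0 : Euc d) 1) with hV
  have hVfin : V ≠ ⊤ := measure_ball_lt_top.ne
  set Vd : ℝ := d * V.toReal with hVd
  have hVd0 : 0 ≤ Vd := by positivity
  set κ : ℝ≥0∞ := (d : ℝ≥0∞) * V with hκ
  have hκV : κ = ENNReal.ofReal Vd := by
    rw [hVd, ENNReal.ofReal_mul (by positivity), ENNReal.ofReal_natCast,
      ENNReal.ofReal_toReal hVfin]
  set C₁ : ℝ := 1 + d * 3 ^ d with hC₁def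
  have hC₁1 : (1:ℝ) ≤ C₁ := le_add_of_nonneg_right (by positivity)
  refine ⟨(2 * C₁ + 9) * (Vd + 1), by positivity, ?_⟩
  intro ρ A B hρ hA hB x y
  set C : ℝ := (2 * C₁ + 9) * (Vd + 1) with hCdef
  clear_value C
  have hA0 : 0 ≤ A :=
    le_trans (integral_nonneg fun _ => abs_nonneg _) hA
  have hvol0 : (volume : Measure (Euc d)) ≠ 0 := by
    intro h
    have := measure_ball_pos volume (0 : Euc d) one_pos
    rw [h] at this; simp at this
  have hB0 : 0 ≤ B := by
    haveI : (ae (volume : Measure (Euc d))).NeBot := ae_neBot.2 hvol0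
    obtain ⟨w, hw⟩ := hB.exists
    exact le_trans (abs_nonneg _) hw
  -- abbreviations
  set f : Euc d → Euc d → Euc d := fun c w => (ρ w / ‖c - w‖ ^ d) • (c - w) with hfdef
  set P : Euc d → ℝ≥0∞ := fun w => ENNReal.ofReal |ρ w| with hPdef
  have hP : ∀ᵐ w ∂(volume : Measure (Euc d)), P w ≤ ENNReal.ofReal B :=
    hB.mono fun w h => ENNReal.ofReal_le_ofReal h
  -- the norm identity
  have hnormid : ∀ (c w : Euc d),
      ENNReal.ofReal ‖f c w‖ = P w * ENNReal.ofReal (1 / ‖c - w‖ ^ (d - 1)) := by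
    intro c w
    have : ‖f c w‖ = |ρ w| * (1 / ‖c - w‖ ^ (d - 1)) := by
      rw [hfdef]
      simp only [norm_smul, Real.norm_eq_abs, abs_div, abs_of_nonneg (by positivity :
        (0:ℝ) ≤ ‖c - w‖ ^ d)]
      rcases eq_or_ne ‖c - w‖ 0 with h0 | h0
      · rw [h0]
        simp [zero_pow (by omega : d ≠ 0), zero_pow (by omega : d - 1 ≠ 0)]
      · have hpow : ‖c - w‖ ^ d = ‖c - w‖ ^ (d - 1) * ‖c - w‖ := by
          rw [← pow_succ]; congr 1; omega
        rw [hpow]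
        field_simp
    rw [this, ENNReal.ofReal_mul (abs_nonneg _)]
  -- measurability facts
  have kmeas : ∀ m : ℕ, Measurable fun z : Euc d => ENNReal.ofReal (1 / ‖z‖ ^ m) :=
    fun m => (measurable_const.div (measurable_norm.pow_const _)).ennreal_ofReal
  have hmeasf : ∀ c : Euc d, AEStronglyMeasurable (f c) volume := by
    intro c
    rw [hfdef]
    refine AEStronglyMeasurable.smul (𝕜 := ℝ) (f := fun w => ρ w / ‖c - w‖ ^ d) (g := fun w => c - w) ?_ ?_
    · exact (hρ.aestronglyMeasurable.aemeasurable.div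
        (((measurable_const.sub measurable_id).norm.pow_const d)).aemeasurable).aestronglyMeasurable
    · exact (continuous_const.sub continuous_id).aestronglyMeasurable
  -- translation invariance
  have hshift : ∀ (c : Euc d) (h : Euc d → ℝ≥0∞), Measurable h →
      ∫⁻ w, h (c - w) = ∫⁻ z, h z :=
    fun c h hh => (Measure.measurePreserving_sub_left volume c).lintegral_comp hh
  -- ball integral, centered
  have F1 : ∀ (c : Euc d) {R : ℝ}, 0 < R →
      ∫⁻ w in ball c R, ENNReal.ofReal (1 / ‖c - w‖ ^ (d - 1)) = κ * ENNReal.ofReal R := by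
    intro c R hR
    rw [← lintegral_indicator measurableSet_ball]
    have hptw : ∀ w, (ball c R).indicator
        (fun w => ENNReal.ofReal (1 / ‖c - w‖ ^ (d - 1))) w =
        ((ball (0 : Euc d) R).indicator fun z => ENNReal.ofReal (1 / ‖z‖ ^ (d - 1))) (c - w) := by
      intro w
      by_cases hw : w ∈ ball c R
      · have hw' : c - w ∈ ball (0 : Euc d) R := by
          rw [mem_ball_zero_iff]
          rw [mem_ball, dist_eq_norm, ← norm_sub_rev] at hw
          exact hw
        rw [Set.indicator_of_mem hw, Set.indicator_of_mem hw']
      · have hw' : c - w ∉ ball (0 : Euc d) R := by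
          rw [mem_ball_zero_iff]
          rw [mem_ball, dist_eq_norm, ← norm_sub_rev] at hw
          exact hw
        rw [Set.indicator_of_notMem hw, Set.indicator_of_notMem hw']
    rw [lintegral_congr hptw,
      hshift c _ ((kmeas (d - 1)).indicator measurableSet_ball),
      lintegral_indicator measurableSet_ball, KL1 hd hR]
  -- annulus integral, centered
  have F2 : ∀ (c : Euc d) {ε : ℝ}, 0 < ε → ε ≤ 1 →
      ∫⁻ w in ball c 1 \ ball c ε, ENNReal.ofReal (1 / ‖c - w‖ ^ d) =
        κ * ENNReal.ofReal (-Real.log ε) := by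
    intro c ε hε hε1
    rw [← lintegral_indicator (measurableSet_ball.diff measurableSet_ball)]
    have hptw : ∀ w, (ball c 1 \ ball c ε).indicator
        (fun w => ENNReal.ofReal (1 / ‖c - w‖ ^ d)) w =
        ((ball (0 : Euc d) 1 \ ball (0 : Euc d) ε).indicator
          fun z => ENNReal.ofReal (1 / ‖z‖ ^ d)) (c - w) := by
      intro w
      have hiff : w ∈ ball c 1 \ ball c ε ↔
          c - w ∈ ball (0 : Euc d) 1 \ ball (0 : Euc d) ε := by
        simp only [mem_diff, mem_ball, mem_ball_zero_iff, dist_eq_norm, ← norm_sub_rev c w, sub_zero]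
      by_cases hw : w ∈ ball c 1 \ ball c ε
      · rw [Set.indicator_of_mem hw, Set.indicator_of_mem (hiff.1 hw)]
      · rw [Set.indicator_of_notMem hw, Set.indicator_of_notMem (fun h => hw (hiff.2 h))]
    rw [lintegral_congr hptw,
      hshift c _ ((kmeas d).indicator (measurableSet_ball.diff measurableSet_ball)),
      lintegral_indicator (measurableSet_ball.diff measurableSet_ball), KL2 hd hε hε1]
  clear_value V Vd κ C₁
  -- near-field bound over a ball
  have F4 : ∀ (c : Euc d) {R : ℝ}, 0 < R →
      ∫⁻ w in ball c R, ENNReal.ofReal ‖f c w‖ ≤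
        ENNReal.ofReal B * (κ * ENNReal.ofReal R) := by
    intro c R hR
    calc ∫⁻ w in ball c R, ENNReal.ofReal ‖f c w‖
        ≤ ∫⁻ w in ball c R, ENNReal.ofReal B * ENNReal.ofReal (1 / ‖c - w‖ ^ (d - 1)) := by
          refine lintegral_mono_ae (ae_restrict_of_ae (hP.mono fun w h => ?_))
          rw [hnormid c w]
          exact mul_le_mul_left h _
      _ = ENNReal.ofReal B * ∫⁻ w in ball c R, ENNReal.ofReal (1 / ‖c - w‖ ^ (d - 1)) :=
          lintegral_const_mul' _ _ ENNReal.ofReal_ne_top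
      _ = ENNReal.ofReal B * (κ * ENNReal.ofReal R) := by rw [F1 c hR]
  -- total mass of `P`
  have hPtot : ∫⁻ w, P w ≤ ENNReal.ofReal A := by
    rw [hPdef, ← ofReal_integral_eq_lintegral_ofReal hρ.abs
      (Filter.Eventually.of_forall fun w => abs_nonneg _)]
    exact ENNReal.ofReal_le_ofReal hA
  -- far-field (outside unit ball) bounds
  have FA : ∀ (c : Euc d) (m : ℕ), 1 ≤ m →
      ∫⁻ w in (ball c 1)ᶜ, P w * ENNReal.ofReal (1 / ‖c - w‖ ^ m) ≤ ENNReal.ofReal A := by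
    intro c m hm
    calc ∫⁻ w in (ball c 1)ᶜ, P w * ENNReal.ofReal (1 / ‖c - w‖ ^ m)
        ≤ ∫⁻ w in (ball c 1)ᶜ, P w := by
          refine lintegral_mono_ae ((ae_restrict_iff' measurableSet_ball.compl).2
            (Filter.Eventually.of_forall fun w hw => ?_))
          have h1 : (1:ℝ) ≤ ‖c - w‖ := by
            rw [mem_compl_iff, mem_ball, not_lt, dist_eq_norm, ← norm_sub_rev c w] at hw
            exact hw
          have h2 : (1 / ‖c - w‖ ^ m : ℝ) ≤ 1 := by
            rw [div_le_one (by positivity)]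
            exact one_le_pow₀ h1
          calc P w * ENNReal.ofReal (1 / ‖c - w‖ ^ m)
              ≤ P w * ENNReal.ofReal 1 :=
                mul_le_mul_right (ENNReal.ofReal_le_ofReal h2) _
            _ = P w := by rw [ENNReal.ofReal_one, mul_one]
      _ ≤ ∫⁻ w, P w := setLIntegral_le_lintegral _ _
      _ ≤ ENNReal.ofReal A := hPtot
  -- total bound
  have E0 : ∀ c : Euc d, ∫⁻ w, ENNReal.ofReal ‖f c w‖ ≤ ENNReal.ofReal (B * Vd + A) := by
    intro c
    rw [← lintegral_add_compl (fun w => ENNReal.ofReal ‖f c w‖)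
      (measurableSet_ball (x := c) (ε := 1))]
    have h2 : ∫⁻ w in (ball c 1)ᶜ, ENNReal.ofReal ‖f c w‖ ≤ ENNReal.ofReal A := by
      refine le_trans (le_of_eq (lintegral_congr fun w => hnormid c w)) (FA c (d - 1) (by omega))
    calc (∫⁻ w in ball c 1, ENNReal.ofReal ‖f c w‖) +
          ∫⁻ w in (ball c 1)ᶜ, ENNReal.ofReal ‖f c w‖
        ≤ ENNReal.ofReal B * (κ * ENNReal.ofReal 1) + ENNReal.ofReal A :=
          add_le_add (F4 c one_pos) h2
      _ = ENNReal.ofReal (B * Vd + A) := by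
          rw [ENNReal.ofReal_one, mul_one, hκV, ← ENNReal.ofReal_mul hB0,
            ← ENNReal.ofReal_add (by positivity) hA0]
  -- integrability
  have hInt : ∀ c : Euc d, Integrable (f c) := by
    intro c
    refine ⟨hmeasf c, ?_⟩
    rw [hasFiniteIntegral_iff_norm]
    exact lt_of_le_of_lt (E0 c) ENNReal.ofReal_lt_top
  -- bound on the field itself
  have Fbound : ∀ c : Euc d, ‖newtField d ρ c‖ ≤ B * Vd + A := by
    intro c
    calc ‖newtField d ρ c‖ ≤ (∫⁻ w, ENNReal.ofReal ‖f c w‖).toReal := by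
          exact norm_integral_le_lintegral_norm (f c)
      _ ≤ B * Vd + A := ENNReal.toReal_le_of_le_ofReal (by positivity) (E0 c)
  -- main case analysis
  set r : ℝ := ‖x - y‖ with hrdef
  clear_value r
  rcases eq_or_lt_of_le (norm_nonneg (x - y)) with hr0 | hr
  · have hxy : x - y = 0 := norm_eq_zero.1 hr0.symm
    have hxy' : x = y := sub_eq_zero.1 hxy
    rw [hxy', sub_self, norm_zero, hrdef, ← hr0]
    simp
  · rw [← hrdef] at hr
    have h1N : 0 ≤ negLog r := le_max_left _ _
    have h1N' : (1:ℝ) ≤ 1 + negLog r := by linarith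
    have hab : 0 ≤ A + B := add_nonneg hA0 hB0
    by_cases hhalf : 1/2 ≤ r
    · -- large separation: crude bound
      have hb : ‖newtField d ρ x - newtField d ρ y‖ ≤ 2*(B*Vd+A) := by
        calc ‖newtField d ρ x - newtField d ρ y‖
            ≤ ‖newtField d ρ x‖ + ‖newtField d ρ y‖ := norm_sub_le _ _
          _ ≤ 2*(B*Vd+A) := by have h1 := Fbound x; have h2 := Fbound y; linarith
      refine hb.trans ?_
      have hC10 : 10*(Vd+1) ≤ C := by
        rw [hCdef]; nlinarith [hC₁1, hVd0]
      have hfac : 1/2 ≤ r * (1 + negLog r) := by nlinarith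
      have hC0 : 0 ≤ C := le_trans (by linarith) hC10
      have h3 : 2*(B*Vd+A) ≤ C*(A+B)*(1/2) := by
        nlinarith [mul_le_mul_of_nonneg_right hC10 hab, mul_nonneg hB0 hVd0,
          mul_nonneg hA0 hVd0, hA0, hB0, hVd0]
      calc 2*(B*Vd+A) ≤ C*(A+B)*(1/2) := h3
        _ ≤ C*(A+B)*(r*(1+negLog r)) :=
            mul_le_mul_of_nonneg_left hfac (mul_nonneg hC0 hab)
        _ = C*(A+B)*r*(1+negLog r) := by ring
    · -- small separation
      push_neg at hhalf
      have h2r : 0 < 2*r := by linarith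
      have h2r1 : 2*r ≤ 1 := by linarith
      have hSmeas : MeasurableSet (ball x (2*r)) := measurableSet_ball
      have hdiffeq : newtField d ρ x - newtField d ρ y = ∫ w, (f x w - f y w) := by
        rw [show newtField d ρ x = ∫ w, f x w from rfl,
          show newtField d ρ y = ∫ w, f y w from rfl]
        exact (integral_sub (hInt x) (hInt y)).symm
      have hL : ‖newtField d ρ x - newtField d ρ y‖ ≤
          (∫⁻ w, ENNReal.ofReal ‖f x w - f y w‖).toReal := by
        rw [hdiffeq]; exact norm_integral_le_lintegral_norm _
      -- near-field part
      have hsub : ball x (2*r) ⊆ ball y (3*r) := by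
        intro w hw
        rw [mem_ball] at hw ⊢
        have hdxy : dist x y = r := by rw [dist_eq_norm, ← hrdef]
        calc dist w y ≤ dist w x + dist x y := dist_triangle _ _ _
          _ < 2*r + r := by rw [hdxy]; linarith
          _ = 3*r := by ring
      have hnear : ∫⁻ w in ball x (2*r), ENNReal.ofReal ‖f x w - f y w‖ ≤
          ENNReal.ofReal B * (κ * ENNReal.ofReal (2*r)) +
            ENNReal.ofReal B * (κ * ENNReal.ofReal (3*r)) := by
        calc ∫⁻ w in ball x (2*r), ENNReal.ofReal ‖f x w - f y w‖
            ≤ ∫⁻ w in ball x (2*r), (ENNReal.ofReal ‖f x w‖ + ENNReal.ofReal ‖f y w‖) := by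
              refine lintegral_mono fun w => ?_
              rw [← ENNReal.ofReal_add (norm_nonneg _) (norm_nonneg _)]
              exact ENNReal.ofReal_le_ofReal (norm_sub_le _ _)
          _ = (∫⁻ w in ball x (2*r), ENNReal.ofReal ‖f x w‖) +
                ∫⁻ w in ball x (2*r), ENNReal.ofReal ‖f y w‖ :=
              lintegral_add_left' (((hmeasf x).norm.aemeasurable.ennreal_ofReal).restrict) _
          _ ≤ _ := add_le_add (F4 x h2r)
              ((lintegral_mono_set hsub).trans (F4 y (by linarith : (0:ℝ) < 3*r)))
      -- far-field pointwise bound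
      have hC₁r0 : 0 ≤ C₁ * r := mul_nonneg (by linarith) hr.le
      have hfarptw : ∀ w ∉ ball x (2*r), ENNReal.ofReal ‖f x w - f y w‖ ≤
          ENNReal.ofReal (C₁*r) * (P w * ENNReal.ofReal (1/‖x-w‖^d)) := by
        intro w hw
        have hxw : 2*r ≤ ‖x - w‖ := by
          rw [mem_ball, not_lt, dist_eq_norm, ← norm_sub_rev x w] at hw
          exact hw
        have hcond : ‖(x - w) - (y - w)‖ ≤ ‖x - w‖ / 2 := by
          rw [sub_sub_sub_cancel_right, ← hrdef]
          linarith
        have hker := ker_diff hd (x - w) (y - w) hcond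
        rw [sub_sub_sub_cancel_right, ← hrdef] at hker
        have heq : f x w - f y w =
            ρ w • ((‖x - w‖ ^ d)⁻¹ • (x - w) - (‖y - w‖ ^ d)⁻¹ • (y - w)) := by
          rw [hfdef]
          simp only [smul_sub, div_eq_mul_inv, mul_smul]
        have hreal : ‖f x w - f y w‖ ≤ (C₁*r) * (|ρ w| * (1/‖x-w‖^d)) := by
          rw [heq, norm_smul, Real.norm_eq_abs]
          calc |ρ w| * ‖(‖x - w‖ ^ d)⁻¹ • (x - w) - (‖y - w‖ ^ d)⁻¹ • (y - w)‖
              ≤ |ρ w| * ((1 + d * 3 ^ d) * r / ‖x - w‖ ^ d) :=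
                mul_le_mul_of_nonneg_left hker (abs_nonneg _)
            _ = (C₁*r) * (|ρ w| * (1/‖x-w‖^d)) := by rw [hC₁def]; ring
        calc ENNReal.ofReal ‖f x w - f y w‖
            ≤ ENNReal.ofReal ((C₁*r) * (|ρ w| * (1/‖x-w‖^d))) := ENNReal.ofReal_le_ofReal hreal
          _ = ENNReal.ofReal (C₁*r) * (P w * ENNReal.ofReal (1/‖x-w‖^d)) := by
              rw [ENNReal.ofReal_mul hC₁r0, ENNReal.ofReal_mul (abs_nonneg _)]
      -- far-field integral bound
      have hfar : ∫⁻ w in (ball x (2*r))ᶜ, ENNReal.ofReal ‖f x w - f y w‖ ≤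
          ENNReal.ofReal (C₁*r) *
            (ENNReal.ofReal B * (κ * ENNReal.ofReal (-Real.log (2*r))) + ENNReal.ofReal A) := by
        calc ∫⁻ w in (ball x (2*r))ᶜ, ENNReal.ofReal ‖f x w - f y w‖
            ≤ ∫⁻ w in (ball x (2*r))ᶜ,
                ENNReal.ofReal (C₁*r) * (P w * ENNReal.ofReal (1/‖x-w‖^d)) :=
              lintegral_mono_ae ((ae_restrict_iff' hSmeas.compl).2
                (Filter.Eventually.of_forall hfarptw))
          _ = ENNReal.ofReal (C₁*r) *
                ∫⁻ w in (ball x (2*r))ᶜ, P w * ENNReal.ofReal (1/‖x-w‖^d) :=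
              lintegral_const_mul' _ _ ENNReal.ofReal_ne_top
          _ ≤ ENNReal.ofReal (C₁*r) *
                (ENNReal.ofReal B * (κ * ENNReal.ofReal (-Real.log (2*r))) + ENNReal.ofReal A) := by
              refine mul_le_mul_right ?_ _
              have hSsub : ball x (2*r) ⊆ ball x 1 := ball_subset_ball (by linarith)
              have hdecomp : (ball x (2*r))ᶜ = (ball x 1 \ ball x (2*r)) ∪ (ball x 1)ᶜ := by
                ext w
                have hw := @hSsub w
                simp only [mem_compl_iff, mem_union, mem_diff]
                tauto
              rw [hdecomp, lintegral_union measurableSet_ball.compl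
                (disjoint_compl_right.mono_left diff_subset)]
              refine add_le_add ?_ (FA x d (by omega))
              calc ∫⁻ w in ball x 1 \ ball x (2*r), P w * ENNReal.ofReal (1/‖x-w‖^d)
                  ≤ ∫⁻ w in ball x 1 \ ball x (2*r),
                      ENNReal.ofReal B * ENNReal.ofReal (1/‖x-w‖^d) :=
                    lintegral_mono_ae (ae_restrict_of_ae
                      (hP.mono fun w h => mul_le_mul_left h _))
                _ = ENNReal.ofReal B *
                      ∫⁻ w in ball x 1 \ ball x (2*r), ENNReal.ofReal (1/‖x-w‖^d) :=
                    lintegral_const_mul' _ _ ENNReal.ofReal_ne_top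
                _ = ENNReal.ofReal B * (κ * ENNReal.ofReal (-Real.log (2*r))) := by
                    rw [F2 x h2r h2r1]
      -- combine in ℝ≥0∞
      have hlog : 0 ≤ -Real.log (2*r) := by
        rw [neg_nonneg]
        exact Real.log_nonpos (by linarith) h2r1
      have hLle : ∫⁻ w, ENNReal.ofReal ‖f x w - f y w‖ ≤
          ENNReal.ofReal (B*(Vd*(2*r)) + B*(Vd*(3*r)) +
            (C₁*r)*(B*(Vd*(-Real.log (2*r))) + A)) := by
        have pos1 : 0 ≤ B*(Vd*(2*r)) := mul_nonneg hB0 (mul_nonneg hVd0 (by linarith))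
        have pos2 : 0 ≤ B*(Vd*(3*r)) := mul_nonneg hB0 (mul_nonneg hVd0 (by linarith))
        have pos3 : 0 ≤ B*(Vd*(-Real.log (2*r))) := mul_nonneg hB0 (mul_nonneg hVd0 hlog)
        rw [← lintegral_add_compl (fun w => ENNReal.ofReal ‖f x w - f y w‖) hSmeas]
        refine le_trans (add_le_add hnear hfar) (le_of_eq ?_)
        rw [hκV]
        rw [← ENNReal.ofReal_mul hVd0, ← ENNReal.ofReal_mul hB0,
          ← ENNReal.ofReal_mul hVd0, ← ENNReal.ofReal_mul hB0,
          ← ENNReal.ofReal_mul hVd0, ← ENNReal.ofReal_mul hB0,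
          ← ENNReal.ofReal_add pos3 hA0,
          ← ENNReal.ofReal_mul hC₁r0,
          ← ENNReal.ofReal_add pos1 pos2,
          ← ENNReal.ofReal_add (add_nonneg pos1 pos2)
            (mul_nonneg hC₁r0 (add_nonneg pos3 hA0))]
      -- final real arithmetic
      have hN : negLog r = -Real.log r :=
        max_eq_right (by rw [neg_nonneg]; exact Real.log_nonpos hr.le (by linarith))
      have hlogle : -Real.log (2*r) ≤ negLog r := by
        rw [hN, Real.log_mul two_ne_zero (ne_of_gt hr)]
        have hl2 : 0 < Real.log 2 := Real.log_pos (by norm_num)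
        linarith
      have hBVd : B*Vd ≤ (Vd+1)*(A+B) := by nlinarith
      have hVAB : 0 ≤ (Vd+1)*(A+B) := mul_nonneg (by linarith) hab
      have hAle : A ≤ (Vd+1)*(A+B)*(1+negLog r) :=
        le_trans (by nlinarith) (le_mul_of_one_le_right hVAB h1N')
      have hfarreal : B*(Vd*(-Real.log (2*r))) + A ≤ 2*((Vd+1)*(A+B)*(1+negLog r)) := by
        have k1 : B*Vd*(-Real.log (2*r)) ≤ (Vd+1)*(A+B)*(1+negLog r) :=
          mul_le_mul hBVd (by linarith) hlog hVAB
        nlinarith [hAle, k1]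
      have hnearreal : B*(Vd*(2*r)) + B*(Vd*(3*r)) ≤ 9*((Vd+1)*(A+B))*r*(1+negLog r) := by
        have k2 : B*Vd*(5*r) ≤ (Vd+1)*(A+B)*(5*r) :=
          mul_le_mul_of_nonneg_right hBVd (by linarith)
        have k3 : 9*((Vd+1)*(A+B))*r ≤ 9*((Vd+1)*(A+B))*r*(1+negLog r) :=
          le_mul_of_one_le_right (by nlinarith [hVAB, hr.le]) h1N'
        nlinarith [k2, k3, mul_nonneg hVAB hr.le]
      have hfinal : B*(Vd*(2*r)) + B*(Vd*(3*r)) +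
          (C₁*r)*(B*(Vd*(-Real.log (2*r))) + A) ≤ C*(A+B)*r*(1+negLog r) := by
        have k4 : (C₁*r)*(B*(Vd*(-Real.log (2*r))) + A) ≤
            (C₁*r)*(2*((Vd+1)*(A+B)*(1+negLog r))) :=
          mul_le_mul_of_nonneg_left hfarreal hC₁r0
        have k5 : 9*((Vd+1)*(A+B))*r*(1+negLog r) + (C₁*r)*(2*((Vd+1)*(A+B)*(1+negLog r))) =
            C*(A+B)*r*(1+negLog r) := by
          rw [hCdef]; ring
        linarith [hnearreal, k4]
      have htarget0 : 0 ≤ C*(A+B)*r*(1+negLog r) := by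
        have hC0 : 0 ≤ C := by rw [hCdef]; nlinarith [hC₁1, hVd0]
        have := mul_nonneg (mul_nonneg (mul_nonneg hC0 hab) hr.le) (by linarith : (0:ℝ) ≤ 1 + negLog r)
        linarith
      exact hL.trans (ENNReal.toReal_le_of_le_ofReal htarget0
        (hLle.trans (ENNReal.ofReal_le_ofReal hfinal)))

end
end

section
/- Fix m > 0 and define ω : [0,∞) → [0,∞) by ω(x) = √(m x φ(x/m)). Then ω is continuous and strictly increasing on [0,∞) with ω(0) = 0, ω > 0 on (0,∞), and for every s₀ > 0 the Osgood condition holds: ∫_{(0,s₀]} 1/ω(r) dr = +∞. -/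
open Real Set MeasureTheory
open scoped ENNReal

noncomputable section

/-- The modulus `ω(x) = √(m x φ(x/m))` associated with mass `m`. -/
def omega (m x : ℝ) : ℝ := Real.sqrt (m * x * phi (x / m))

lemma c_pos : 0 < Real.exp (-1 - Real.sqrt 2) := Real.exp_pos _

lemma sqrt2_gt_one : (1:ℝ) < Real.sqrt 2 := by
  have h2 : Real.sqrt 2 ^ 2 = 2 := Real.sq_sqrt (by norm_num)
  nlinarith [Real.sqrt_nonneg 2]

lemma c_lt_one : Real.exp (-1 - Real.sqrt 2) < 1 := by
  rw [Real.exp_lt_one_iff]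
  nlinarith [Real.sqrt_nonneg 2]

/-- value matching at the junction -/
lemma phi_junction :
    Real.exp (-1 - Real.sqrt 2) * Real.log (Real.exp (-1 - Real.sqrt 2)) ^ 2
      = Real.exp (-1 - Real.sqrt 2) + 2 * (1 + Real.sqrt 2) * Real.exp (-1 - Real.sqrt 2) := by
  rw [Real.log_exp]
  have h2 : Real.sqrt 2 ^ 2 = 2 := Real.sq_sqrt (by norm_num)
  nlinarith [Real.exp_pos (-1 - Real.sqrt 2)]

lemma phi_zero : phi 0 = 0 := by
  simp [phi, (c_pos).le]

lemma phi_pos {x : ℝ} (hx : 0 < x) : 0 < phi x := by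
  unfold phi
  split_ifs with h
  · have hlog : Real.log x ≤ -1 - Real.sqrt 2 := by
      calc Real.log x ≤ Real.log (Real.exp (-1 - Real.sqrt 2)) := Real.log_le_log hx h
        _ = -1 - Real.sqrt 2 := Real.log_exp _
    have hneg : Real.log x < 0 := by nlinarith [Real.sqrt_nonneg 2]
    have : 0 < Real.log x ^ 2 := by nlinarith
    exact mul_pos hx this
  · have := c_pos
    nlinarith [Real.sqrt_nonneg 2]

lemma phi_nonneg {x : ℝ} (hx : 0 ≤ x) : 0 ≤ phi x := by
  rcases eq_or_lt_of_le hx with rfl | h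
  · rw [phi_zero]
  · exact (phi_pos h).le

lemma contOn_f : ContinuousOn (fun x : ℝ => x * Real.log x ^ 2) (Set.Ici 0) := by
  have h : ContinuousOn (fun x : ℝ => 4 * (Real.sqrt x * Real.log (Real.sqrt x)) ^ 2)
      (Set.Ici 0) :=
    (continuous_const.mul ((Real.continuous_mul_log.comp Real.continuous_sqrt).pow 2)).continuousOn
  refine h.congr ?_
  intro x hx
  have hx' : (0:ℝ) ≤ x := hx
  show x * Real.log x ^ 2 = 4 * (Real.sqrt x * Real.log (Real.sqrt x)) ^ 2
  rw [Real.log_sqrt hx', mul_pow, Real.sq_sqrt hx']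
  ring

lemma phi_eq_right {x : ℝ} (hx : Real.exp (-1 - Real.sqrt 2) ≤ x) :
    phi x = x + 2 * (1 + Real.sqrt 2) * Real.exp (-1 - Real.sqrt 2) := by
  unfold phi
  split_ifs with h
  · have hxc : x = Real.exp (-1 - Real.sqrt 2) := le_antisymm h hx
    subst hxc
    exact phi_junction
  · rfl

lemma phi_contOn : ContinuousOn phi (Set.Ici 0) := by
  unfold phi
  apply ContinuousOn.if
  · intro a ha
    have hfr : a ∈ frontier {a : ℝ | a ≤ Real.exp (-1 - Real.sqrt 2)} := ha.2
    have : a = Real.exp (-1 - Real.sqrt 2) := by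
      have : frontier {a : ℝ | a ≤ Real.exp (-1 - Real.sqrt 2)} = {Real.exp (-1 - Real.sqrt 2)} := by
        simpa [Set.Iic] using frontier_Iic (a := Real.exp (-1 - Real.sqrt 2))
      rw [this] at hfr
      exact hfr
    subst this
    exact phi_junction
  · exact contOn_f.mono (fun x hx => hx.1)
  · exact (continuous_id.add continuous_const).continuousOn

lemma f_strictMono :
    StrictMonoOn (fun x : ℝ => x * Real.log x ^ 2)
      (Set.Icc 0 (Real.exp (-1 - Real.sqrt 2))) := by
  apply strictMonoOn_of_deriv_pos (convex_Icc _ _)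
  · exact contOn_f.mono (fun x hx => hx.1)
  · intro x hx
    rw [interior_Icc] at hx
    have hx0 : 0 < x := hx.1
    have hd : HasDerivAt (fun x : ℝ => x * Real.log x ^ 2)
        (1 * Real.log x ^ 2 + x * ((2 : ℕ) * Real.log x ^ 1 * x⁻¹)) x :=
      (hasDerivAt_id x).mul ((Real.hasDerivAt_log hx0.ne').pow 2)
    have hd' : deriv (fun x : ℝ => x * Real.log x ^ 2) x
        = Real.log x ^ 2 + 2 * Real.log x := by
      rw [hd.deriv]
      field_simp
      norm_num
    rw [hd']
    have hlog : Real.log x < -1 - Real.sqrt 2 := by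
      calc Real.log x < Real.log (Real.exp (-1 - Real.sqrt 2)) :=
        Real.log_lt_log hx0 hx.2
        _ = -1 - Real.sqrt 2 := Real.log_exp _
    nlinarith [sqrt2_gt_one]

lemma phi_strictMono : StrictMonoOn phi (Set.Ici 0) := by
  have h1 : StrictMonoOn phi (Set.Icc 0 (Real.exp (-1 - Real.sqrt 2))) := by
    intro x hx y hy hxy
    have := f_strictMono hx hy hxy
    simpa [phi, if_pos hx.2, if_pos hy.2] using this
  have h2 : StrictMonoOn phi (Set.Ici (Real.exp (-1 - Real.sqrt 2))) := by
    intro x hx y hy hxy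
    rw [phi_eq_right hx, phi_eq_right hy]
    linarith
  intro x hx y hy hxy
  rcases le_total y (Real.exp (-1 - Real.sqrt 2)) with h | h
  · exact h1 ⟨hx, hxy.le.trans h⟩ ⟨hy, h⟩ hxy
  · rcases le_total x (Real.exp (-1 - Real.sqrt 2)) with h' | h'
    · rcases eq_or_lt_of_le h with heq | hlt
      · have : x < Real.exp (-1 - Real.sqrt 2) := heq ▸ hxy
        have := h1 ⟨hx, h'⟩ ⟨c_pos.le, le_refl _⟩ this
        rwa [heq] at this
      · have hxc : phi x ≤ phi (Real.exp (-1 - Real.sqrt 2)) := by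
          rcases eq_or_lt_of_le h' with rfl | hlt'
          · exact le_refl _
          · exact (h1 ⟨hx, h'⟩ ⟨c_pos.le, le_refl _⟩ hlt').le
        exact lt_of_le_of_lt hxc (h2 (Set.mem_Ici.mpr le_rfl) h hlt)
    · exact h2 h' (h'.trans hxy.le) hxy

lemma omega_zero (m : ℝ) : omega m 0 = 0 := by
  simp [omega, phi_zero]

lemma omega_pos (m : ℝ) (hm : 0 < m) {x : ℝ} (hx : 0 < x) : 0 < omega m x := by
  have : 0 < m * x * phi (x / m) := by
    have := phi_pos (div_pos hx hm)
    positivity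
  exact Real.sqrt_pos.mpr this

lemma omega_strictMono (m : ℝ) (hm : 0 < m) : StrictMonoOn (omega m) (Set.Ici 0) := by
  intro x hx y hy hxy
  have hx' : (0:ℝ) ≤ x := hx
  have hy' : (0:ℝ) < y := lt_of_le_of_lt hx hxy
  apply Real.sqrt_lt_sqrt
  · have := phi_nonneg (div_nonneg hx' hm.le)
    positivity
  · have hphi_pos : 0 < phi (y / m) := phi_pos (div_pos hy' hm)
    have hmono : phi (x / m) ≤ phi (y / m) := by
      rcases eq_or_lt_of_le hx' with rfl | hx0
      · rw [show (0:ℝ)/m = 0 by simp, phi_zero]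
        exact hphi_pos.le
      · exact (phi_strictMono (div_nonneg hx' hm.le) (div_nonneg hy'.le hm.le)
          (by gcongr)).le
    calc m * x * phi (x / m) ≤ m * x * phi (y / m) := by
          apply mul_le_mul_of_nonneg_left hmono (by positivity)
      _ < m * y * phi (y / m) := by
          apply mul_lt_mul_of_pos_right _ hphi_pos
          exact (mul_lt_mul_iff_right₀ hm).mpr hxy

lemma omega_contOn (m : ℝ) (hm : 0 < m) : ContinuousOn (omega m) (Set.Ici 0) := by
  apply Real.continuous_sqrt.comp_continuousOn
  apply ContinuousOn.mul
  · exact (continuous_const.mul continuous_id).continuousOn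
  · apply phi_contOn.comp (continuous_id.div_const m).continuousOn
    intro x hx
    exact div_nonneg hx hm.le

lemma omega_eq_small (m : ℝ) (hm : 0 < m) {r : ℝ} (hr : 0 < r)
    (hrc : r ≤ m * Real.exp (-1 - Real.sqrt 2)) :
    omega m r = r * (Real.log m - Real.log r) := by
  have hrm : r / m ≤ Real.exp (-1 - Real.sqrt 2) := by
    rw [div_le_iff₀ hm]; linarith [hrc, mul_comm m (Real.exp (-1 - Real.sqrt 2))]
  have hrltm : r < m := by
    have := c_lt_one
    nlinarith
  have hlogpos : 0 < Real.log m - Real.log r := by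
    have := Real.log_lt_log hr hrltm
    linarith
  have hkey : m * r * phi (r / m) = (r * (Real.log m - Real.log r)) ^ 2 := by
    unfold phi
    rw [if_pos hrm, Real.log_div hr.ne' hm.ne']
    field_simp
    ring
  rw [omega, hkey, Real.sqrt_sq (by positivity)]

lemma osgood (m : ℝ) (hm : 0 < m) (s₀ : ℝ) (hs : 0 < s₀) :
    ∫⁻ r in Set.Ioc (0:ℝ) s₀, ENNReal.ofReal (1 / omega m r) = ⊤ := by
  set c := Real.exp (-1 - Real.sqrt 2) with hcdef
  have hc0 : 0 < c := c_pos
  have hc1 : c < 1 := c_lt_one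
  set a := min s₀ (m * c) with hadef
  have ha0 : 0 < a := lt_min hs (mul_pos hm hc0)
  have hamc : a ≤ m * c := min_le_right _ _
  have ham : a < m := lt_of_le_of_lt hamc (by nlinarith)
  have hua : 0 < Real.log m - Real.log a := by
    have := Real.log_lt_log ha0 ham
    linarith
  set F := fun r : ℝ => -Real.log (Real.log m - Real.log r) with hFdef
  set g := fun r : ℝ => 1 / (r * (Real.log m - Real.log r)) with hgdef
  have key : ∀ ε : ℝ, 0 < ε → ε < a →
      ENNReal.ofReal (F a - F ε) ≤ ∫⁻ r in Set.Ioc (0:ℝ) s₀, ENNReal.ofReal (1 / omega m r) := by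
    intro ε hε hεa
    have hsub : Set.Ioc ε a ⊆ Set.Ioc 0 s₀ :=
      fun r hr => ⟨hε.trans hr.1, hr.2.trans (min_le_left _ _)⟩
    have hmono : (∫⁻ r in Set.Ioc ε a, ENNReal.ofReal (1 / omega m r))
        ≤ ∫⁻ r in Set.Ioc (0:ℝ) s₀, ENNReal.ofReal (1 / omega m r) :=
      lintegral_mono_set hsub
    have hcong : ∫⁻ r in Set.Ioc ε a, ENNReal.ofReal (1 / omega m r)
        = ∫⁻ r in Set.Ioc ε a, ENNReal.ofReal (g r) := by
      apply setLIntegral_congr_fun measurableSet_Ioc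
      intro r hr
      dsimp only
      rw [omega_eq_small m hm (hε.trans hr.1) (hr.2.trans hamc)]
    -- continuity of g on Icc ε a
    have hne : ∀ r ∈ Set.Icc ε a, r * (Real.log m - Real.log r) ≠ 0 := by
      intro r hr
      have hr0 : 0 < r := hε.trans_le hr.1
      have hrm : r < m := lt_of_le_of_lt hr.2 ham
      have : 0 < Real.log m - Real.log r := by
        have := Real.log_lt_log hr0 hrm
        linarith
      positivity
    have hgc : ContinuousOn g (Set.Icc ε a) := by
      apply ContinuousOn.div continuousOn_const _ hne
      exact continuousOn_id.mul (continuousOn_const.sub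
        (Real.continuousOn_log.mono (fun r hr => by
          have : 0 < r := hε.trans_le hr.1
          simpa using this.ne')))
    have hInt : IntegrableOn g (Set.Ioc ε a) :=
      (hgc.integrableOn_compact isCompact_Icc).mono_set Set.Ioc_subset_Icc_self
    have hnn : 0 ≤ᵐ[volume.restrict (Set.Ioc ε a)] g := by
      rw [Filter.EventuallyLE, ae_restrict_iff' measurableSet_Ioc]
      apply Filter.Eventually.of_forall
      intro r hr
      have hr0 : 0 < r := hε.trans hr.1
      have hrm : r < m := lt_of_le_of_lt hr.2 ham
      have : 0 < Real.log m - Real.log r := by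
        have := Real.log_lt_log hr0 hrm
        linarith
      have : 0 < g r := by rw [hgdef]; positivity
      exact this.le
    have hval : ∫ r in Set.Ioc ε a, g r = F a - F ε := by
      rw [← intervalIntegral.integral_of_le hεa.le]
      apply intervalIntegral.integral_eq_sub_of_hasDerivAt
      · intro r hr
        rw [Set.uIcc_of_le hεa.le] at hr
        have hr0 : 0 < r := hε.trans_le hr.1
        have hrm : r < m := lt_of_le_of_lt hr.2 ham
        have hu : 0 < Real.log m - Real.log r := by
          have := Real.log_lt_log hr0 hrm
          linarith
        have h1 : HasDerivAt (fun r : ℝ => Real.log m - Real.log r) (0 - r⁻¹) r :=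
          (hasDerivAt_const r (Real.log m)).sub (Real.hasDerivAt_log hr0.ne')
        have h2 : HasDerivAt F (-((0 - r⁻¹) / (Real.log m - Real.log r))) r :=
          (h1.log hu.ne').neg
        refine h2.congr_deriv ?_
        rw [hgdef]
        field_simp
        ring
      · rw [intervalIntegrable_iff_integrableOn_Ioc_of_le hεa.le]
        exact hInt
    have heq : ENNReal.ofReal (F a - F ε) = ∫⁻ r in Set.Ioc ε a, ENNReal.ofReal (g r) := by
      rw [← hval]
      exact ofReal_integral_eq_lintegral_ofReal hInt hnn
    rw [heq, ← hcong]
    exact hmono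
  -- now conclude
  by_contra hne
  set I := ∫⁻ r in Set.Ioc (0:ℝ) s₀, ENNReal.ofReal (1 / omega m r) with hI
  set B := I.toReal with hB
  have hB0 : 0 ≤ B := ENNReal.toReal_nonneg
  set T := Real.exp (B + 1 + Real.log (Real.log m - Real.log a)) with hT
  have hT0 : 0 < T := Real.exp_pos _
  set ε := min (a / 2) (m * Real.exp (-T)) with hε
  have hε0 : 0 < ε := lt_min (by linarith) (mul_pos hm (Real.exp_pos _))
  have hεa : ε < a := lt_of_le_of_lt (min_le_left _ _) (by linarith)
  have hlogε : Real.log ε ≤ Real.log m - T := by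
    calc Real.log ε ≤ Real.log (m * Real.exp (-T)) :=
      Real.log_le_log hε0 (min_le_right _ _)
      _ = Real.log m - T := by rw [Real.log_mul hm.ne' (Real.exp_pos _).ne', Real.log_exp]; ring
  have huε : T ≤ Real.log m - Real.log ε := by linarith
  have hFbig : B + 1 ≤ F a - F ε := by
    have h1 : Real.log T ≤ Real.log (Real.log m - Real.log ε) :=
      Real.log_le_log hT0 huε
    have h2 : Real.log T = B + 1 + Real.log (Real.log m - Real.log a) := by
      rw [hT, Real.log_exp]
    rw [hFdef]
    simp only
    linarith
  have hle := key ε hε0 hεa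
  rw [← ENNReal.ofReal_toReal hne, ENNReal.ofReal_le_ofReal_iff hB0] at hle
  linarith

/-- `ω` is continuous and strictly increasing on `[0,∞)`,
vanishes at `0`, is positive on `(0,∞)`, and satisfies the Osgood
condition `∫_{(0,s₀]} dr/ω(r) = +∞` for every `s₀ > 0`. -/
theorem omega_osgood (m : ℝ) (hm : 0 < m) :
    ContinuousOn (omega m) (Set.Ici 0) ∧
    StrictMonoOn (omega m) (Set.Ici 0) ∧
    omega m 0 = 0 ∧
    (∀ x : ℝ, 0 < x → 0 < omega m x) ∧
    (∀ s₀ : ℝ, 0 < s₀ →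
      ∫⁻ r in Set.Ioc (0:ℝ) s₀, ENNReal.ofReal (1 / omega m r) = ⊤) := by
  exact ⟨omega_contOn m hm, omega_strictMono m hm, omega_zero m,
    fun x hx => omega_pos m hm hx, fun s₀ hs => osgood m hm s₀ hs⟩

end
end
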